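/- arXiv:1203.0631 — 3 statements merged into one kernel-verified Lean document; each statement's English description precedes it below -/
import Mathlib

section
/- Hypercube expansion: Let f : Bool^n → Bool depend on all n of its variables, and suppose there exists a relevance hypercube for a p-element subset u of the variables. Then for every q with p ≤ q ≤ n there exists a q-element subset w of the variables with u ⊆ w such that f has a relevance hypercube for w. -/
/-- A Boolean function `f` depends on variable `i`. -/
def BoolDependsOn {ι : Type*} (f : (ι → Bool) → Bool) (i : ι) : Prop :=
  ∃ a b : ι → Bool, (∀ j, j ≠ i → a j = b j) ∧ f a ≠ f b

/-- The projection of `f` obtained by fixing all variables outside `S`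
to the values given by `p`. -/
def Restrict {n : ℕ} (f : (Fin n → Bool) → Bool) (S : Finset (Fin n))
    (p : Fin n → Bool) : (Fin n → Bool) → Bool :=
  fun x => f fun j => if j ∈ S then x j else p j

/-- `p` determines a relevance hypercube for `S`: the induced projection
depends on every variable of `S`. -/
def IsRelHypercube {n : ℕ} (f : (Fin n → Bool) → Bool) (S : Finset (Fin n))
    (p : Fin n → Bool) : Prop :=
  ∀ i ∈ S, BoolDependsOn (Restrict f S p) i

lemma restrict_congr {n : ℕ} (f : (Fin n → Bool) → Bool) (S : Finset (Fin n))
    (p p' : Fin n → Bool) (h : ∀ j ∉ S, p j = p' j) : Restrict f S p = Restrict f S p' := by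
  funext x
  unfold Restrict
  congr 1
  funext j
  by_cases hj : j ∈ S <;> simp [hj, h j]

lemma path_edge {n : ℕ} {α : Type*} (G : (Fin n → Bool) → α) :
    ∀ (d : Finset (Fin n)) (a b : Fin n → Bool), (∀ j, a j ≠ b j → j ∈ d) → G a ≠ G b →
    ∃ c j, G c = G a ∧ G c ≠ G (Function.update c j (!(c j))) := by
  intro d
  induction d using Finset.induction_on with
  | empty =>
    intro a b h hne
    exact absurd (congrArg G (funext fun j => by_contra fun hj => (Finset.notMem_empty j) (h j hj))) hne
  | @insert j s hj ih =>
    intro a b h hne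
    by_cases hab : a j = b j
    · exact ih a b (fun k hk => by
        have := h k hk
        rcases Finset.mem_insert.mp this with rfl | hs
        · exact absurd hab hk
        · exact hs) hne
    · set a' := Function.update a j (b j) with ha'
      by_cases hG : G a' = G a
      · obtain ⟨c, i, hc1, hc2⟩ := ih a' b (fun k hk => by
          by_cases hkj : k = j
          · subst hkj; simp [ha'] at hk
          · have hak : a k ≠ b k := by simpa [ha', Function.update_of_ne hkj] using hk
            rcases Finset.mem_insert.mp (h k hak) with h1 | h2
            · exact absurd h1 hkj
            · exact h2) (hG ▸ hne)
        exact ⟨c, i, hc1.trans hG, hc2⟩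
      · refine ⟨a, j, rfl, ?_⟩
        have hbj : b j = !(a j) := by
          cases hb : b j <;> cases ha : a j <;> simp_all
        rw [← hbj, ← ha']
        exact fun he => hG he.symm

lemma restrict_insert {n : ℕ} (f : (Fin n → Bool) → Bool) (u : Finset (Fin n))
    (j : Fin n) (hj : j ∉ u) (c x : Fin n → Bool) (v : Bool) :
    Restrict f (insert j u) c (Function.update x j v)
      = Restrict f u (Function.update c j v) x := by
  unfold Restrict
  congr 1
  funext k
  by_cases hkj : k = j
  · subst hkj; simp [hj]
  · by_cases hk : k ∈ u <;> simp [hk, hkj, Function.update_of_ne hkj]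

lemma step {n : ℕ} (f : (Fin n → Bool) → Bool) (hf : ∀ i, BoolDependsOn f i)
    (u : Finset (Fin n)) (hcard : u.card < n) (p : Fin n → Bool)
    (hp : IsRelHypercube f u p) :
    ∃ j ∉ u, ∃ p', IsRelHypercube f (insert j u) p' := by
  set G : (Fin n → Bool) → ((Fin n → Bool) → Bool) := fun c => Restrict f u c with hGdef
  -- There is some c with G c ≠ G p, else f depends only on u.
  have hne : ∃ c, G c ≠ G p := by
    by_contra hall
    push_neg at hall
    -- f depends only on variables in u; but there is a variable outside u
    have hsub : u ⊂ Finset.univ := Finset.ssubset_univ_iff.mpr (by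
      intro h; rw [h, Finset.card_univ, Fintype.card_fin] at hcard; exact lt_irrefl _ hcard)
    obtain ⟨j, _, hju⟩ := Finset.exists_of_ssubset hsub
    obtain ⟨a, b, hab, hfab⟩ := hf j
    have h1 : f a = G p a := by
      have h0 : G a a = f a := by simp [hGdef, Restrict]
      rw [← h0, hall a]
    have h2 : f b = G p b := by
      have : G b b = f b := by simp [hGdef, Restrict]
      rw [← this, hall b]
    have h3 : G p a = G p b := by
      simp only [hGdef, Restrict]
      congr 1
      funext k
      by_cases hk : k ∈ u
      · have : k ≠ j := fun he => hju (he ▸ hk)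
        simp [hk, hab k this]
      · simp [hk]
    exact hfab (h1.trans (h3.trans h2.symm))
  obtain ⟨c1, hc1⟩ := hne
  obtain ⟨c, j, hcp, hcj⟩ := path_edge G Finset.univ p c1 (fun _ _ => Finset.mem_univ _) hc1.symm
  -- j ∉ u: changing c inside u does not change G c
  have hju : j ∉ u := by
    intro hjuIn
    refine hcj (restrict_congr f u c _ (fun k hk => ?_))
    have hkj : k ≠ j := fun he => hk (he ▸ hjuIn)
    exact (Function.update_of_ne hkj _ c).symm
  refine ⟨j, hju, c, ?_⟩
  intro i hi
  rcases Finset.mem_insert.mp hi with rfl | hiu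
  · -- dependence on j
    obtain ⟨x, hx⟩ := Function.ne_iff.mp hcj
    refine ⟨Function.update x i (c i), Function.update x i (!(c i)), ?_, ?_⟩
    · intro k hk; simp [Function.update_of_ne hk]
    · rw [restrict_insert f u i hju, restrict_insert f u i hju, Function.update_eq_self]
      exact hx
  · -- dependence on i ∈ u
    have hdep : BoolDependsOn (G c) i := by
      rw [hcp]
      exact hp i hiu
    obtain ⟨x, y, hxy, hGxy⟩ := hdep
    refine ⟨Function.update x j (c j), Function.update y j (c j), ?_, ?_⟩
    · intro k hk
      by_cases hkj : k = j
      · subst hkj; simp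
      · simp [Function.update_of_ne hkj, hxy k hk]
    · rw [restrict_insert f u j hju, restrict_insert f u j hju, Function.update_eq_self]
      exact hGxy

/-- Hypercube expansion. -/
theorem stmt2 {n : ℕ} (f : (Fin n → Bool) → Bool) (hf : ∀ i, BoolDependsOn f i)
    (u : Finset (Fin n)) (hu : ∃ p, IsRelHypercube f u p)
    (q : ℕ) (hq1 : u.card ≤ q) (hq2 : q ≤ n) :
    ∃ w : Finset (Fin n), u ⊆ w ∧ w.card = q ∧ ∃ p, IsRelHypercube f w p := by
  induction q, hq1 using Nat.le_induction with
  | base => exact ⟨u, Finset.Subset.refl u, rfl, hu⟩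
  | succ q hq ih =>
    obtain ⟨w, huw, hwcard, pw, hpw⟩ := ih (Nat.le_of_succ_le hq2)
    have hwn : w.card < n := hwcard ▸ Nat.lt_of_succ_le hq2
    obtain ⟨j, hjw, p', hp'⟩ := step f hf w hwn pw hpw
    exact ⟨insert j w, huw.trans (Finset.subset_insert j w),
      by rw [Finset.card_insert_of_notMem hjw, hwcard], p', hp'⟩
end

section
/- Every singleton subset of the relevant variables of a Boolean function f is stable: for any set w of variables with {x} ⊆ w and any relevance hypercube H for w, there exists a relevance hypercube H' for {x} with H' ⊆ H (i.e., the partial assignment defining H' extends the one defining H). -/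
/-- Every singleton subset of the variables of f is stable. -/
theorem stmt4 {n : ℕ} (f : (Fin n → Bool) → Bool) (hf : ∀ i, BoolDependsOn f i)
    (x : Fin n) (w : Finset (Fin n)) (hx : x ∈ w)
    (p : Fin n → Bool) (hp : IsRelHypercube f w p) :
    ∃ p' : Fin n → Bool, (∀ j ∉ w, p' j = p j) ∧
      IsRelHypercube f ({x} : Finset (Fin n)) p' := by
  obtain ⟨a, b, hab, hne⟩ := hp x hx
  refine ⟨fun j => if j ∈ w then a j else p j, fun j hj => by simp [hj], ?_⟩
  intro i hi
  simp only [Finset.mem_singleton] at hi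
  subst hi
  refine ⟨a, b, hab, ?_⟩
  have h1 : Restrict f {i} (fun j => if j ∈ w then a j else p j) a
      = Restrict f w p a := by
    unfold Restrict
    congr 1
    funext j
    by_cases hj : j = i
    · simp [hj, hx]
    · simp [hj]
  have h2 : Restrict f {i} (fun j => if j ∈ w then a j else p j) b
      = Restrict f w p b := by
    unfold Restrict
    congr 1
    funext j
    by_cases hj : j = i
    · simp [hj, hx]
    · by_cases hjw : j ∈ w <;> simp [hj, hjw, hab j hj]
  rw [h1, h2]
  exact hne
end

section
/- Let f : Bool^n → Bool be expressible as f(x) = f₁(x_A) ∘ f₂(x_B) where ∘ ∈ {∧, ∨, ⊕}, A and B partition {1,…,n}, and f₁, f₂ depend on all their respective variables. Then for any variable u ∈ A and any variable v ∈ B, f has a relevance hypercube for {u, v}, and the restriction of f to every such hypercube is similar (up to negating inputs and output) to the two-variable function z₁ ∘ z₂. -/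
/-- Similarity of two-variable Boolean functions: equality up to negating
inputs and/or output and permuting the arguments. -/
def Similar2 (F G : Bool → Bool → Bool) : Prop :=
  ∃ σ σ₁ σ₂ : Bool,
    (∀ a b, F a b = xor σ (G (xor σ₁ a) (xor σ₂ b))) ∨
    (∀ a b, F a b = xor σ (G (xor σ₁ b) (xor σ₂ a)))

private lemma aux_bne (g : Bool → Bool) {s t : Bool} (hst : s ≠ t) (h : g s ≠ g t) :
    g false ≠ g true := by
  cases s <;> cases t
  · exact absurd rfl hst
  · exact h
  · exact fun e => h e.symm
  · exact absurd rfl hst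

private lemma aux_lin (g : Bool → Bool) (h : g false ≠ g true) : ∀ t, g t = xor (g false) t := by
  intro t; cases t
  · simp
  · cases hgt : g true <;> cases hgf : g false <;> simp_all

private lemma aux_not (g : Bool → Bool) (h : g false ≠ g true) : g true = ! g false := by
  cases hgt : g true <;> cases hgf : g false <;> simp_all

theorem stmt12 {n : ℕ} (f f₁ f₂ : (Fin n → Bool) → Bool)
    (A B : Finset (Fin n)) (hAB : Disjoint A B) (hABu : A ∪ B = Finset.univ)
    (op : Bool → Bool → Bool) (hop : op = and ∨ op = or ∨ op = xor)
    (h1only : ∀ x y, (∀ i ∈ A, x i = y i) → f₁ x = f₁ y)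
    (h2only : ∀ x y, (∀ i ∈ B, x i = y i) → f₂ x = f₂ y)
    (h1dep : ∀ i ∈ A, BoolDependsOn f₁ i) (h2dep : ∀ i ∈ B, BoolDependsOn f₂ i)
    (hf : ∀ x, f x = op (f₁ x) (f₂ x))
    (u v : Fin n) (hu : u ∈ A) (hv : v ∈ B) :
    (∃ p, IsRelHypercube f ({u, v} : Finset (Fin n)) p) ∧
    ∀ p : Fin n → Bool, IsRelHypercube f ({u, v} : Finset (Fin n)) p →
      Similar2 (fun a b => f fun j => if j = u then a else if j = v then b else p j)
        op := by
  have huv : u ≠ v := fun h => Finset.disjoint_left.mp hAB hu (h ▸ hv)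
  have hAv : ∀ i ∈ A, i ≠ v := fun i hi h => Finset.disjoint_left.mp hAB hi (h ▸ hv)
  have hBu : ∀ i ∈ B, i ≠ u := fun i hi h => Finset.disjoint_left.mp hAB hu (h ▸ hi)
  -- the restriction to the {u,v}-hypercube splits through f₁, f₂
  have key : ∀ (p x : Fin n → Bool),
      Restrict f ({u, v} : Finset (Fin n)) p x
        = op (f₁ (fun j => if j = u then x u else p j))
            (f₂ (fun j => if j = v then x v else p j)) := by
    intro p x
    show f _ = _
    rw [hf]
    congr 1
    · apply h1only
      intro i hi
      have hiv := hAv i hi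
      by_cases hiu : i = u
      · subst hiu; simp
      · simp [hiu, hiv]
    · apply h2only
      intro i hi
      have hiu := hBu i hi
      by_cases hiv : i = v
      · subst hiv; simp [hiu]
      · simp [hiu, hiv]
  have keyF : ∀ (p : Fin n → Bool) (a b : Bool),
      f (fun j => if j = u then a else if j = v then b else p j)
        = op (f₁ (fun j => if j = u then a else p j))
            (f₂ (fun j => if j = v then b else p j)) := by
    intro p a b
    rw [hf]
    congr 1
    · apply h1only
      intro i hi
      have hiv := hAv i hi
      by_cases hiu : i = u
      · subst hiu; simp
      · simp [hiu, hiv]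
    · apply h2only
      intro i hi
      have hiu := hBu i hi
      by_cases hiv : i = v
      · subst hiv; simp [hiu]
      · simp [hiu, hiv]
  -- on any relevance hypercube, both induced one-variable functions are non-constant
  have hnc : ∀ p : Fin n → Bool, IsRelHypercube f ({u, v} : Finset (Fin n)) p →
      (f₁ (fun j => if j = u then false else p j) ≠ f₁ (fun j => if j = u then true else p j)) ∧
      (f₂ (fun j => if j = v then false else p j) ≠ f₂ (fun j => if j = v then true else p j)) := by
    intro p hp
    constructor
    · obtain ⟨a, b, hab, hne⟩ := hp u (by simp)
      rw [key p a, key p b] at hne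
      have hav : a v = b v := hab v (Ne.symm huv)
      have h1 : f₁ (fun j => if j = u then a u else p j)
          ≠ f₁ (fun j => if j = u then b u else p j) := by
        intro h; exact hne (by rw [h, hav])
      have habu : a u ≠ b u := fun h => h1 (by rw [h])
      exact aux_bne (fun t => f₁ (fun j => if j = u then t else p j)) habu h1
    · obtain ⟨a, b, hab, hne⟩ := hp v (by simp)
      rw [key p a, key p b] at hne
      have hau : a u = b u := hab u huv
      have h2 : f₂ (fun j => if j = v then a v else p j)
          ≠ f₂ (fun j => if j = v then b v else p j) := by
        intro h; exact hne (by rw [h, hau])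
      have habv : a v ≠ b v := fun h => h2 (by rw [h])
      exact aux_bne (fun t => f₂ (fun j => if j = v then t else p j)) habv h2
  constructor
  · -- existence of a relevance hypercube
    obtain ⟨a₁, b₁, hab₁, hne₁⟩ := h1dep u hu
    obtain ⟨a₂, b₂, hab₂, hne₂⟩ := h2dep v hv
    set p : Fin n → Bool := fun j => if j ∈ A then a₁ j else a₂ j with hpdef
    refine ⟨p, ?_⟩
    have hg1a : f₁ (fun j => if j = u then a₁ u else p j) = f₁ a₁ := by
      apply h1only; intro i hi
      by_cases hiu : i = u
      · subst hiu; simp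
      · simp [hiu, hpdef, hi]
    have hg1b : f₁ (fun j => if j = u then b₁ u else p j) = f₁ b₁ := by
      apply h1only; intro i hi
      by_cases hiu : i = u
      · subst hiu; simp
      · simp [hiu, hpdef, hi, hab₁ i hiu]
    have hg2a : f₂ (fun j => if j = v then a₂ v else p j) = f₂ a₂ := by
      apply h2only; intro i hi
      have hiA : i ∉ A := Finset.disjoint_right.mp hAB hi
      by_cases hiv : i = v
      · subst hiv; simp
      · simp [hiv, hpdef, hiA]
    have hg2b : f₂ (fun j => if j = v then b₂ v else p j) = f₂ b₂ := by
      apply h2only; intro i hi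
      have hiA : i ∉ A := Finset.disjoint_right.mp hAB hi
      by_cases hiv : i = v
      · subst hiv; simp
      · simp [hiv, hpdef, hiA, hab₂ i hiv]
    have hneu : a₁ u ≠ b₁ u := by
      intro h
      exact hne₁ (congrArg f₁ (funext fun j => by
        by_cases hj : j = u
        · subst hj; exact h
        · exact hab₁ j hj))
    have hnev : a₂ v ≠ b₂ v := by
      intro h
      exact hne₂ (congrArg f₂ (funext fun j => by
        by_cases hj : j = v
        · subst hj; exact h
        · exact hab₂ j hj))
    have H1 : f₁ (fun j => if j = u then false else p j)
        ≠ f₁ (fun j => if j = u then true else p j) := by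
      refine aux_bne (fun t => f₁ (fun j => if j = u then t else p j)) hneu ?_
      show f₁ _ ≠ f₁ _
      rw [hg1a, hg1b]; exact hne₁
    have H2 : f₂ (fun j => if j = v then false else p j)
        ≠ f₂ (fun j => if j = v then true else p j) := by
      refine aux_bne (fun t => f₂ (fun j => if j = v then t else p j)) hnev ?_
      show f₂ _ ≠ f₂ _
      rw [hg2a, hg2b]; exact hne₂
    have keyR : ∀ (q : Fin n → Bool) (a b : Bool),
        Restrict f ({u, v} : Finset (Fin n)) q
            (fun j => if j = u then a else if j = v then b else q j)
          = op (f₁ (fun j => if j = u then a else q j))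
              (f₂ (fun j => if j = v then b else q j)) := by
      intro q a b
      show f _ = _
      rw [← keyF q a b]
      congr 1
      funext j
      by_cases hju : j = u
      · subst hju; simp
      · by_cases hjv : j = v
        · subst hjv; simp [Ne.symm huv, hju]
        · simp [hju, hjv]
    have depu : BoolDependsOn (Restrict f ({u, v} : Finset (Fin n)) p) u := by
      obtain ⟨d, hd⟩ : ∃ d, ∀ t, op t d ≠ op (!t) d := by
        rcases hop with rfl | rfl | rfl
        · exact ⟨true, by decide⟩
        · exact ⟨false, by decide⟩
        · exact ⟨true, by decide⟩
      obtain ⟨w, hw⟩ : ∃ w, f₂ (fun j => if j = v then w else p j) = d := by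
        refine ⟨xor (f₂ (fun j => if j = v then false else p j)) d, ?_⟩
        rw [show (f₂ fun j => if j = v then
              (xor (f₂ fun j => if j = v then false else p j) d) else p j)
            = xor (f₂ fun j => if j = v then false else p j)
              (xor (f₂ fun j => if j = v then false else p j) d) from
          aux_lin (fun t => f₂ (fun j => if j = v then t else p j)) H2 _]
        generalize f₂ (fun j => if j = v then false else p j) = c
        cases c <;> cases d <;> rfl
      refine ⟨(fun j => if j = u then false else if j = v then w else p j),
        (fun j => if j = u then true else if j = v then w else p j), ?_, ?_⟩
      · intro j hj; simp [hj]
      · rw [keyR p false w, keyR p true w, hw,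
          show (f₁ fun j => if j = u then true else p j)
              = ! (f₁ fun j => if j = u then false else p j) from
            aux_not (fun t => f₁ (fun j => if j = u then t else p j)) H1]
        exact hd _
    have depv : BoolDependsOn (Restrict f ({u, v} : Finset (Fin n)) p) v := by
      obtain ⟨d, hd⟩ : ∃ d, ∀ t, op d t ≠ op d (!t) := by
        rcases hop with rfl | rfl | rfl
        · exact ⟨true, by decide⟩
        · exact ⟨false, by decide⟩
        · exact ⟨true, by decide⟩
      obtain ⟨w, hw⟩ : ∃ w, f₁ (fun j => if j = u then w else p j) = d := by
        refine ⟨xor (f₁ (fun j => if j = u then false else p j)) d, ?_⟩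
        rw [show (f₁ fun j => if j = u then
              (xor (f₁ fun j => if j = u then false else p j) d) else p j)
            = xor (f₁ fun j => if j = u then false else p j)
              (xor (f₁ fun j => if j = u then false else p j) d) from
          aux_lin (fun t => f₁ (fun j => if j = u then t else p j)) H1 _]
        generalize f₁ (fun j => if j = u then false else p j) = c
        cases c <;> cases d <;> rfl
      refine ⟨(fun j => if j = u then w else if j = v then false else p j),
        (fun j => if j = u then w else if j = v then true else p j), ?_, ?_⟩
      · intro j hj
        by_cases hju : j = u
        · simp [hju]
        · simp [hju, hj]
      · rw [keyR p w false, keyR p w true, hw,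
          show (f₂ fun j => if j = v then true else p j)
              = ! (f₂ fun j => if j = v then false else p j) from
            aux_not (fun t => f₂ (fun j => if j = v then t else p j)) H2]
        exact hd _
    intro i hi
    simp only [Finset.mem_insert, Finset.mem_singleton] at hi
    rcases hi with hi | hi
    · exact hi.symm ▸ depu
    · exact hi.symm ▸ depv
  · -- every relevance hypercube restriction is similar to op
    intro p hp
    obtain ⟨H1, H2⟩ := hnc p hp
    refine ⟨false, f₁ (fun j => if j = u then false else p j),
      f₂ (fun j => if j = v then false else p j), Or.inl ?_⟩
    intro a b
    show f _ = _
    rw [keyF p a b, Bool.false_xor]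
    rw [show (f₁ fun j => if j = u then a else p j)
        = xor (f₁ fun j => if j = u then false else p j) a from
      aux_lin (fun t => f₁ (fun j => if j = u then t else p j)) H1 a]
    rw [show (f₂ fun j => if j = v then b else p j)
        = xor (f₂ fun j => if j = v then false else p j) b from
      aux_lin (fun t => f₂ (fun j => if j = v then t else p j)) H2 b]
end
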